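/- Define f₁(z) = -e^{-z} · Σ_{j=1}^∞ (z^j/j!) · j·log j for z ≥ 0. Then f₁ is twice differentiable on (0,∞) and its second derivative satisfies f₁''(z) = -e^{-z} · Σ_{t=0}^∞ (z^t/t!) · u(t), where u(t) = (t+2)log(t+2) + t·log t - 2(t+1)log(t+1). -/

import Mathlib

lemma nat_cube_le (n : ℕ) : n^3 ≤ 4 * 2^n := by
  induction n with
  | zero => norm_num
  | succ n ih =>
    rcases lt_or_ge n 4 with h | h
    · interval_cases n <;> norm_num
    · have k1 : 4*(n*n) ≤ n*(n*n) := Nat.mul_le_mul_right _ h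
      have h1 : (n+1)^3 ≤ 2 * n^3 := by nlinarith [k1, h]
      have h2 : 2 * n^3 ≤ 2 * (4 * 2^n) := by omega
      calc (n+1)^3 ≤ 2 * (4*2^n) := le_trans h1 h2
        _ = 4 * 2^(n+1) := by ring

lemma summable_cube (x : ℝ) (hx : 0 ≤ x) :
    Summable (fun n : ℕ => ((n:ℝ)+1)^3 * x^n / n.factorial) := by
  have h := (Real.summable_pow_div_factorial (2*x)).mul_left 8
  refine Summable.of_nonneg_of_le (fun n => by positivity) (fun n => ?_) h
  have hc : ((n:ℝ)+1)^3 ≤ 8 * 2^n := by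
    have h1 : ((n+1:ℕ):ℝ)^3 ≤ 4 * 2^(n+1) := by exact_mod_cast nat_cube_le (n+1)
    push_cast at h1
    calc ((n:ℝ)+1)^3 ≤ 4 * 2^(n+1) := h1
      _ = 8 * 2^n := by ring
  calc ((n:ℝ)+1)^3 * x^n / n.factorial ≤ (8*2^n) * x^n / n.factorial := by
        gcongr
    _ = 8 * ((2*x)^n / n.factorial) := by rw [mul_pow]; ring

lemma summable_main (a : ℕ → ℝ) (C : ℝ) (ha : ∀ j : ℕ, |a j| ≤ C * ((j:ℝ)+1)^2) (z : ℝ) :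
    Summable (fun j : ℕ => z ^ j / (j.factorial : ℝ) * a j) := by
  have hC : 0 ≤ C := by simpa using (abs_nonneg (a 0)).trans (ha 0)
  refine Summable.of_norm ?_
  refine Summable.of_nonneg_of_le (fun n => norm_nonneg _) (fun n => ?_)
    ((summable_cube |z| (abs_nonneg z)).mul_left C)
  have hnorm : ‖z ^ n / (n.factorial : ℝ) * a n‖ = |z|^n / (n.factorial : ℝ) * |a n| := by
    rw [norm_mul, norm_div, norm_pow]
    simp [Nat.abs_cast]
  rw [hnorm]
  calc |z|^n / (n.factorial : ℝ) * |a n| ≤ |z|^n / (n.factorial : ℝ) * (C * ((n:ℝ)+1)^2) :=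
        mul_le_mul_of_nonneg_left (ha n) (by positivity)
    _ = C * (((n:ℝ)+1)^2 * |z|^n / n.factorial) := by ring
    _ ≤ C * (((n:ℝ)+1)^3 * |z|^n / n.factorial) := by
        gcongr
        · norm_num
        · norm_num

lemma hasDerivAt_main (a : ℕ → ℝ) (C : ℝ) (ha : ∀ j : ℕ, |a j| ≤ C * ((j:ℝ)+1)^2) (z : ℝ) :
    HasDerivAt (fun y : ℝ => ∑' j : ℕ, y ^ j / (j.factorial : ℝ) * a j)
      (∑' t : ℕ, z ^ t / (t.factorial : ℝ) * a (t+1)) z := by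
  have hC : 0 ≤ C := by simpa using (abs_nonneg (a 0)).trans (ha 0)
  set R : ℝ := |z| + 1 with hRdef
  have hR1 : (1:ℝ) ≤ R := by simp [hRdef, abs_nonneg]
  have hR0 : (0:ℝ) < R := lt_of_lt_of_le one_pos hR1
  have hzmem : z ∈ Metric.ball (0:ℝ) R := by
    simp [Metric.mem_ball, Real.dist_eq, hRdef]
  set u : ℕ → ℝ := fun j => C * (((j:ℝ)+1)^3 * R^j / j.factorial) with hu_def
  have hu : Summable u := (summable_cube R hR0.le).mul_left C
  have hg : ∀ (n : ℕ) (y : ℝ), y ∈ Metric.ball (0:ℝ) R →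
      HasDerivAt (fun x : ℝ => x ^ n / (n.factorial : ℝ) * a n)
        (((n:ℝ) * y ^ (n-1) / (n.factorial : ℝ)) * a n) y :=
    fun n y _ => ((hasDerivAt_pow n y).div_const _).mul_const _
  have hg' : ∀ (n : ℕ) (y : ℝ), y ∈ Metric.ball (0:ℝ) R →
      ‖((n:ℝ) * y ^ (n-1) / (n.factorial : ℝ)) * a n‖ ≤ u n := by
    intro n y hy
    have hyR : |y| ≤ R := by
      have := Metric.mem_ball.mp hy
      rw [Real.dist_eq, sub_zero] at this
      exact this.le
    have h1 : ‖((n:ℝ) * y ^ (n-1) / (n.factorial : ℝ)) * a n‖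
        = ((n:ℝ) * |y| ^ (n-1) / (n.factorial : ℝ)) * |a n| := by
      rw [norm_mul, norm_div, norm_mul, norm_pow]
      simp [Nat.abs_cast]
    rw [h1]
    have hyn : |y| ^ (n-1) ≤ R ^ n := by
      calc |y| ^ (n-1) ≤ R ^ (n-1) := pow_le_pow_left₀ (abs_nonneg y) hyR _
        _ ≤ R ^ n := pow_le_pow_right₀ hR1 (Nat.sub_le n 1)
    calc ((n:ℝ) * |y| ^ (n-1) / (n.factorial : ℝ)) * |a n|
        ≤ (((n:ℝ)+1) * R ^ n / (n.factorial : ℝ)) * (C * ((n:ℝ)+1)^2) := by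
          apply mul_le_mul
          · gcongr
            linarith [Nat.cast_nonneg (α := ℝ) n]
          · exact ha n
          · exact abs_nonneg _
          · positivity
      _ = u n := by rw [hu_def]; ring
  have hg0 : Summable fun n : ℕ => z ^ n / (n.factorial : ℝ) * a n := summable_main a C ha z
  have key := hasDerivAt_tsum_of_isPreconnected hu Metric.isOpen_ball
    ((convex_ball (0:ℝ) R).isPreconnected) hg hg' hzmem hg0 hzmem
  have hS : Summable (fun n : ℕ => ((n:ℝ) * z ^ (n-1) / (n.factorial : ℝ)) * a n) :=
    Summable.of_norm (Summable.of_nonneg_of_le (fun n => norm_nonneg _)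
      (fun n => hg' n z hzmem) hu)
  have hsum : (∑' n : ℕ, ((n:ℝ) * z ^ (n-1) / (n.factorial : ℝ)) * a n)
      = ∑' t : ℕ, z ^ t / (t.factorial : ℝ) * a (t+1) := by
    rw [Summable.tsum_eq_zero_add hS]
    simp only [Nat.cast_zero, zero_mul, zero_div, zero_add, Nat.add_sub_cancel]
    congr 1
    funext t
    have ht : ((t:ℝ)+1) ≠ 0 := by positivity
    rw [Nat.factorial_succ]
    push_cast
    field_simp
  rw [hsum] at key
  exact key

noncomputable def aSeq (j : ℕ) : ℝ := (j : ℝ) * Real.log (j : ℝ)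

lemma aSeq_nonneg (j : ℕ) : 0 ≤ aSeq j := by
  unfold aSeq
  rcases Nat.eq_zero_or_pos j with h | h
  · simp [h]
  · exact mul_nonneg (Nat.cast_nonneg j) (Real.log_nonneg (by exact_mod_cast h))

lemma aSeq_bound (k : ℕ) (j : ℕ) : |aSeq (j + k)| ≤ ((k:ℝ)+1)^2 * ((j:ℝ)+1)^2 := by
  rw [abs_of_nonneg (aSeq_nonneg _)]
  have h1 : aSeq (j+k) ≤ ((j+k:ℕ):ℝ)^2 := by
    unfold aSeq
    rcases Nat.eq_zero_or_pos (j+k) with h | h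
    · simp [h]
    · have hj : (0:ℝ) < ((j+k:ℕ):ℝ) := by exact_mod_cast h
      have := Real.log_le_sub_one_of_pos hj
      nlinarith
  refine h1.trans ?_
  have : ((j+k:ℕ):ℝ) ≤ ((k:ℝ)+1) * ((j:ℝ)+1) := by
    push_cast
    nlinarith [Nat.cast_nonneg (α := ℝ) j, Nat.cast_nonneg (α := ℝ) k]
  calc ((j+k:ℕ):ℝ)^2 ≤ (((k:ℝ)+1) * ((j:ℝ)+1))^2 := by
        apply pow_le_pow_left₀ (Nat.cast_nonneg _) this
    _ = ((k:ℝ)+1)^2 * ((j:ℝ)+1)^2 := by ring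


/-- `f₁(z) = -e^{-z} ∑_{j≥1} (z^j/j!) j log j` (the `j = 0` term vanishes). -/
noncomputable def fOne (z : ℝ) : ℝ :=
  -(Real.exp (-z) * ∑' j : ℕ, z ^ j / (j.factorial : ℝ) * ((j : ℝ) * Real.log (j : ℝ)))

/-- `u(t) = (t+2)log(t+2) + t log t - 2(t+1)log(t+1)`. -/
noncomputable def uFun (t : ℕ) : ℝ :=
  ((t : ℝ) + 2) * Real.log ((t : ℝ) + 2) + (t : ℝ) * Real.log (t : ℝ) -
    2 * ((t : ℝ) + 1) * Real.log ((t : ℝ) + 1)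

theorem stmt_3 (z : ℝ) (hz : 0 < z) :
    DifferentiableAt ℝ fOne z ∧ DifferentiableAt ℝ (deriv fOne) z ∧
      deriv (deriv fOne) z =
        -(Real.exp (-z) * ∑' t : ℕ, z ^ t / (t.factorial : ℝ) * uFun t) := by
  have ha0 : ∀ j : ℕ, |aSeq j| ≤ 1 * ((j:ℝ)+1)^2 := by
    intro j; simpa using aSeq_bound 0 j
  have ha1 : ∀ j : ℕ, |aSeq (j+1)| ≤ 4 * ((j:ℝ)+1)^2 := by
    intro j; have := aSeq_bound 1 j; norm_num at this ⊢; linarith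
  have ha2 : ∀ j : ℕ, |aSeq (j+2)| ≤ 9 * ((j:ℝ)+1)^2 := by
    intro j; have := aSeq_bound 2 j; norm_num at this ⊢; linarith
  set g : ℝ → ℝ := fun y => ∑' j : ℕ, y ^ j / (j.factorial : ℝ) * aSeq j with hg_def
  set g1 : ℝ → ℝ := fun y => ∑' j : ℕ, y ^ j / (j.factorial : ℝ) * aSeq (j+1) with hg1_def
  set g2 : ℝ → ℝ := fun y => ∑' j : ℕ, y ^ j / (j.factorial : ℝ) * aSeq (j+2) with hg2_def
  have hgd : ∀ y : ℝ, HasDerivAt g (g1 y) y := fun y => hasDerivAt_main aSeq 1 ha0 y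
  have hg1d : ∀ y : ℝ, HasDerivAt g1 (g2 y) y := fun y =>
    hasDerivAt_main (fun j => aSeq (j+1)) 4 ha1 y
  have he : ∀ y : ℝ, HasDerivAt (fun x : ℝ => Real.exp (-x)) (-Real.exp (-y)) y := by
    intro y
    simpa [Function.comp_def] using (Real.hasDerivAt_exp (-y)).comp y (hasDerivAt_neg y)
  have hfOne : fOne = fun y => -(Real.exp (-y) * g y) := rfl
  have hF : ∀ y : ℝ, HasDerivAt fOne (Real.exp (-y) * (g y - g1 y)) y := by
    intro y
    rw [hfOne]
    have := ((he y).mul (hgd y)).neg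
    exact this.congr_deriv (by ring)
  have hderiv : deriv fOne = fun y => Real.exp (-y) * (g y - g1 y) :=
    funext fun y => (hF y).deriv
  have hF2 : ∀ y : ℝ, HasDerivAt (fun x => Real.exp (-x) * (g x - g1 x))
      (Real.exp (-y) * (-(g y) + 2 * g1 y - g2 y)) y := by
    intro y
    have := (he y).mul ((hgd y).sub (hg1d y))
    exact this.congr_deriv (by rw [Pi.sub_apply]; ring)
  refine ⟨(hF z).differentiableAt, ?_, ?_⟩
  · rw [hderiv]; exact (hF2 z).differentiableAt
  · rw [hderiv, (hF2 z).deriv]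
    have h0 := summable_main aSeq 1 ha0 z
    have h1 := summable_main (fun j => aSeq (j+1)) 4 ha1 z
    have h2 := summable_main (fun j => aSeq (j+2)) 9 ha2 z
    have hsplit : ∀ t : ℕ, z ^ t / (t.factorial : ℝ) * uFun t =
        z ^ t / (t.factorial : ℝ) * aSeq (t+2)
        - 2 * (z ^ t / (t.factorial : ℝ) * aSeq (t+1))
        + z ^ t / (t.factorial : ℝ) * aSeq t := by
      intro t
      unfold uFun aSeq
      push_cast
      ring
    have hS : (∑' t : ℕ, z ^ t / (t.factorial : ℝ) * uFun t) = g2 z - 2 * g1 z + g z := by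
      rw [tsum_congr hsplit, Summable.tsum_add (h2.sub (h1.mul_left 2)) h0,
        Summable.tsum_sub h2 (h1.mul_left 2), tsum_mul_left]
    rw [hS]
    ring
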